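/- Let r ≥ 1, 1 ≤ s < ∞, μ > 2r − 1/s + 1. There exists c > 0 such that for every f ∈ W_s^μ and every N ≥ r, the uniform norm of the difference between f^{(r)} and the r-th derivative of the N-th partial Chebyshev–Fourier sum of f satisfies ‖f^{(r)} − Σ_{k=r}^N ⟨f,T_k⟩ T_k^{(r)}‖_C ≤ c ‖f‖_{s,μ} N^{−μ+2r−1/s+1}. -/

import Mathlib

open Real

noncomputable def chebT (k : ℕ) : ℝ → ℝ := fun t => (Polynomial.Chebyshev.T ℝ k).eval t

noncomputable def Torth (k : ℕ) : ℝ → ℝ :=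
  fun t => (if k = 0 then Real.sqrt π⁻¹ else Real.sqrt (2 / π)) * chebT k t

noncomputable def w (t : ℝ) : ℝ := (1 - t ^ 2) ^ (-(1:ℝ)/2)

noncomputable def chebCoeff (f : ℝ → ℝ) (k : ℕ) : ℝ :=
  ∫ t in (-1:ℝ)..1, w t * f t * Torth k t

noncomputable def normC (g : ℝ → ℝ) : ℝ := ⨆ t : Set.Icc (-1:ℝ) 1, |g t|

noncomputable def normL2 (g : ℝ → ℝ) : ℝ := Real.sqrt (∫ t in (-1:ℝ)..1, w t * (g t) ^ 2)

noncomputable def normW (s μ : ℝ) (f : ℝ → ℝ) : ℝ :=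
  (∑' k : ℕ, (max 1 (k:ℝ)) ^ (s*μ) * |chebCoeff f k| ^ s) ^ (1/s)

noncomputable def chebDeriv (r : ℕ) (f : ℝ → ℝ) : ℝ → ℝ :=
  fun t => ∑' k : ℕ, chebCoeff f k * iteratedDeriv r (Torth k) t

open ENNReal in
noncomputable def seqLpNorm (p : ℝ≥0∞) (ξ : ℕ → ℝ) : ℝ :=
  if p = ⊤ then ⨆ k, |ξ k| else (∑' k, |ξ k| ^ p.toReal) ^ (1 / p.toReal)


section PolyBounds
open Polynomial Polynomial.Chebyshev

private lemma iterDeriv_eval (p : ℝ[X]) : ∀ n : ℕ,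
    iteratedDeriv n (fun t => p.eval t) = fun t => ((⇑derivative)^[n] p).eval t
  | 0 => by simp
  | (n+1) => by
    rw [iteratedDeriv_succ']
    have h : deriv (fun t => p.eval t) = fun t => (derivative p).eval t := by
      funext x; exact Polynomial.deriv p
    rw [h, iterDeriv_eval (derivative p) n]
    funext t
    rw [← Function.iterate_succ_apply]

private lemma iterDeriv_add (p q : ℝ[X]) (n : ℕ) :
    (⇑derivative)^[n] (p + q) = (⇑derivative)^[n] p + (⇑derivative)^[n] q := by
  induction n with
  | zero => rfl
  | succ n ih => simp [Function.iterate_succ_apply', ih]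

private lemma U_rec (n : ℤ) : U ℝ (n + 2) = U ℝ n + 2 * T ℝ (n + 2) := by
  have h1 := U_add_two ℝ n
  have h2 := U_eq_X_mul_U_add_T ℝ (n + 1)
  rw [show (n + 1 + 1 : ℤ) = n + 2 by ring] at h2
  linear_combination 2 * h2 - h1

private lemma natDegree_T_le : ∀ k : ℕ, (T ℝ (k : ℤ)).natDegree ≤ k := by
  intro k
  induction k using Nat.strong_induction_on with
  | _ k ih =>
    match k, ih with
    | 0, _ => simp [T_zero]
    | 1, _ => simpa [T_one] using natDegree_X_le
    | (m+2), ih =>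
      have h := T_add_two ℝ (m : ℤ)
      rw [show ((m : ℤ) + 2) = ((m + 2 : ℕ) : ℤ) by push_cast; ring,
        show ((m : ℤ) + 1) = ((m + 1 : ℕ) : ℤ) by push_cast; ring] at h
      rw [h]
      refine le_trans (natDegree_sub_le _ _) (max_le ?_ ?_)
      · refine le_trans (natDegree_mul_le) ?_
        have h1 : (2 * X : ℝ[X]).natDegree ≤ 1 := by
          refine le_trans natDegree_mul_le ?_
          simp [natDegree_X]
        have h2 := ih (m+1) (by omega)
        omega
      · exact le_trans (ih m (by omega)) (by omega)

private def Abound (r : ℕ) : Prop := ∀ (k : ℕ) (t : ℝ), |t| ≤ 1 →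
  |((⇑derivative)^[r] (T ℝ (k : ℤ))).eval t| ≤ 2^r * (max 1 (k:ℝ))^(2*r)

private def Bbound (r : ℕ) : Prop := ∀ (k : ℕ) (t : ℝ), |t| ≤ 1 →
  |((⇑derivative)^[r] (U ℝ (k : ℤ))).eval t| ≤ 2^(r+1) * ((k:ℝ)+1)^(2*r+1)

private lemma Abound_zero : Abound 0 := by
  intro k t ht
  obtain ⟨h1, h2⟩ := abs_le.mp ht
  have hT := T_real_cos (arccos t) (k : ℤ)
  rw [Real.cos_arccos h1 h2] at hT
  simpa [hT] using abs_cos_le_one ((k : ℤ) * arccos t)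

private lemma B_of_A {r : ℕ} (hA : Abound r) : Bbound r := by
  intro k
  induction k using Nat.strong_induction_on with
  | _ k ih =>
    match k, ih with
    | 0, _ =>
      intro t ht
      rcases Nat.eq_zero_or_pos r with h0 | h0
      · subst h0
        simp only [Function.iterate_zero, id_eq, Nat.cast_zero, U_zero, eval_one]
        norm_num
      · rw [iterate_derivative_eq_zero (p := U ℝ ((0:ℕ) : ℤ))
          (by simpa [Nat.cast_zero, U_zero] using h0)]
        simp
    | 1, _ =>
      intro t ht
      rw [show ((1:ℕ) : ℤ) = 1 by norm_num]
      match r with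
      | 0 =>
        simp only [Function.iterate_zero, id_eq, U_one]
        have : |(2 * X : ℝ[X]).eval t| ≤ 2 := by
          simp only [eval_mul, eval_ofNat, eval_X, abs_mul]
          calc |(2:ℝ)| * |t| ≤ 2 * 1 := by
                apply mul_le_mul (by norm_num) ht (abs_nonneg t) (by norm_num)
            _ = 2 := by norm_num
        refine le_trans this (by norm_num)
      | 1 =>
        simp only [Function.iterate_one, U_one]
        have hd : derivative (2 * X : ℝ[X]) = 2 := by
          simp
        rw [hd]
        simp only [eval_ofNat]
        rw [show |(2:ℝ)| = 2 by norm_num]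
        norm_num
      | (n+2) =>
        have hdeg : (U ℝ (1 : ℤ)).natDegree < n + 2 := by
          have : (U ℝ (1 : ℤ)).natDegree ≤ 1 := by
            rw [U_one]
            refine le_trans natDegree_mul_le ?_
            simp [natDegree_X]
          omega
        rw [iterate_derivative_eq_zero hdeg]
        simp
    | (m+2), ih =>
      intro t ht
      have hU : U ℝ ((m+2 : ℕ) : ℤ) = U ℝ (m : ℤ) + 2 * T ℝ ((m+2 : ℕ) : ℤ) := by
        have h := U_rec (m : ℤ)
        rwa [show ((m : ℤ) + 2) = ((m + 2 : ℕ) : ℤ) by push_cast; ring] at h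
      have h2C : (C (2:ℝ) : ℝ[X]) = (2 : ℝ[X]) := map_ofNat Polynomial.C 2
      rw [hU, ← h2C, iterDeriv_add, eval_add, iterate_derivative_C_mul, eval_mul, eval_C]
      have hB := ih m (by omega) t ht
      have hT := hA (m+2) t ht
      have hmax : max 1 ((m+2 : ℕ) : ℝ) = (m:ℝ) + 2 := by
        rw [max_eq_right] <;> push_cast <;> linarith [Nat.cast_nonneg (α := ℝ) m]
      rw [hmax] at hT
      have hx : (0:ℝ) ≤ (m:ℝ) := Nat.cast_nonneg m
      calc |((⇑derivative)^[r] (U ℝ (m : ℤ))).eval t + 2 * ((⇑derivative)^[r] (T ℝ ((m+2:ℕ) : ℤ))).eval t|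
          ≤ |((⇑derivative)^[r] (U ℝ (m : ℤ))).eval t| + |2 * ((⇑derivative)^[r] (T ℝ ((m+2:ℕ) : ℤ))).eval t| := abs_add_le _ _
        _ ≤ 2^(r+1) * ((m:ℝ)+1)^(2*r+1) + 2 * (2^r * ((m:ℝ)+2)^(2*r)) := by
            rw [abs_mul]
            have : |(2:ℝ)| = 2 := by norm_num
            rw [this]
            exact add_le_add hB (by nlinarith [abs_nonneg (((⇑derivative)^[r] (T ℝ ((m+2:ℕ) : ℤ))).eval t)])
        _ = 2^(r+1) * (((m:ℝ)+1)^(2*r+1) + ((m:ℝ)+2)^(2*r)) := by ring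
        _ ≤ 2^(r+1) * (((m:ℝ)+3)^(2*r+1)) := by
            have e1 : ((m:ℝ)+1)^(2*r+1) ≤ ((m:ℝ)+1) * ((m:ℝ)+3)^(2*r) := by
              rw [pow_succ]
              rw [mul_comm (((m:ℝ)+1)^(2*r)) _]
              exact mul_le_mul_of_nonneg_left (pow_le_pow_left₀ (by linarith) (by linarith) _) (by linarith)
            have e2 : ((m:ℝ)+2)^(2*r) ≤ ((m:ℝ)+3)^(2*r) :=
              pow_le_pow_left₀ (by linarith) (by linarith) _
            have e3 : ((m:ℝ)+3)^(2*r+1) = ((m:ℝ)+3) * ((m:ℝ)+3)^(2*r) := by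
              rw [pow_succ]; ring
            have e4 : ((m:ℝ)+1) * ((m:ℝ)+3)^(2*r) + ((m:ℝ)+3)^(2*r) ≤ ((m:ℝ)+3) * ((m:ℝ)+3)^(2*r) := by
              nlinarith [pow_nonneg (by linarith : (0:ℝ) ≤ (m:ℝ)+3) (2*r)]
            have h5 : ((m:ℝ)+1)^(2*r+1) + ((m:ℝ)+2)^(2*r) ≤ ((m:ℝ)+3)^(2*r+1) := by
              rw [e3]; linarith
            exact mul_le_mul_of_nonneg_left h5 (by positivity)
        _ = 2^(r+1) * (((m+2:ℕ):ℝ)+1)^(2*r+1) := by push_cast; ring_nf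

private lemma A_succ {r : ℕ} (hB : Bbound r) : Abound (r+1) := by
  intro k t ht
  match k with
  | 0 =>
    rw [iterate_derivative_eq_zero (p := T ℝ ((0:ℕ) : ℤ))
      (by simp [Nat.cast_zero, T_zero])]
    simp
  | (j+1) =>
    rw [Function.iterate_succ_apply]
    have hd : derivative (T ℝ ((j+1 : ℕ) : ℤ)) = C ((j:ℝ)+1) * U ℝ ((j:ℕ) : ℤ) := by
      have h := T_derivative_eq_U (R := ℝ) ((j+1 : ℕ) : ℤ)
      rw [show ((j+1:ℕ) : ℤ) - 1 = ((j:ℕ) : ℤ) by push_cast; ring] at h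
      rw [h]
      have hC : (((j+1:ℕ):ℤ) : ℝ[X]) = C ((j:ℝ)+1) := by
        rw [← Polynomial.C_eq_intCast]
        congr 1
        push_cast
        ring
      rw [hC]
    rw [hd, iterate_derivative_C_mul, eval_mul, eval_C, abs_mul]
    have hU := hB j t ht
    have hmax : max 1 ((j+1 : ℕ) : ℝ) = (j:ℝ) + 1 := by
      rw [max_eq_right] <;> push_cast <;> linarith [Nat.cast_nonneg (α := ℝ) j]
    rw [hmax]
    have habs : |(j:ℝ)+1| = (j:ℝ)+1 := abs_of_nonneg (by positivity)
    rw [habs]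
    calc ((j:ℝ)+1) * |((⇑derivative)^[r] (U ℝ ((j:ℕ) : ℤ))).eval t|
        ≤ ((j:ℝ)+1) * (2^(r+1) * ((j:ℝ)+1)^(2*r+1)) :=
          mul_le_mul_of_nonneg_left hU (by positivity)
      _ = 2^(r+1) * ((j:ℝ)+1)^(2*(r+1)) := by ring

private lemma Abound_all : ∀ r, Abound r := by
  intro r
  induction r with
  | zero => exact Abound_zero
  | succ r ih => exact A_succ (B_of_A ih)

private lemma iteratedDeriv_Torth_eq (r k : ℕ) :
    iteratedDeriv r (Torth k) = fun t =>
      (if k = 0 then Real.sqrt π⁻¹ else Real.sqrt (2 / π)) *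
        ((⇑derivative)^[r] (T ℝ (k : ℤ))).eval t := by
  have h : Torth k = fun t =>
      (C (if k = 0 then Real.sqrt π⁻¹ else Real.sqrt (2 / π)) * T ℝ (k : ℤ)).eval t := by
    funext t; simp [Torth, chebT]
  rw [h, iterDeriv_eval]
  funext t
  rw [iterate_derivative_C_mul, eval_mul, eval_C]

private lemma Torth_deriv_bound (r k : ℕ) {t : ℝ} (ht : |t| ≤ 1) :
    |iteratedDeriv r (Torth k) t| ≤ 2^r * (max 1 (k:ℝ))^(2*r) := by
  rw [iteratedDeriv_Torth_eq, abs_mul]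
  have hc : |if k = 0 then Real.sqrt π⁻¹ else Real.sqrt (2 / π)| ≤ 1 := by
    have h1 : (1:ℝ) ≤ π := by linarith [Real.two_le_pi]
    split
    · rw [abs_of_nonneg (Real.sqrt_nonneg _)]
      exact Real.sqrt_le_one.mpr (inv_le_one_of_one_le₀ h1)
    · rw [abs_of_nonneg (Real.sqrt_nonneg _)]
      refine Real.sqrt_le_one.mpr ((div_le_one (by positivity)).mpr (by linarith [Real.two_le_pi]))
  calc |if k = 0 then Real.sqrt π⁻¹ else Real.sqrt (2 / π)| *
        |((⇑derivative)^[r] (T ℝ (k : ℤ))).eval t|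
      ≤ 1 * (2^r * (max 1 (k:ℝ))^(2*r)) := by
        apply mul_le_mul hc (Abound_all r k t ht) (abs_nonneg _) (by norm_num)
    _ = 2^r * (max 1 (k:ℝ))^(2*r) := by ring

private lemma Torth_deriv_zero {r k : ℕ} (hk : k < r) (t : ℝ) :
    iteratedDeriv r (Torth k) t = 0 := by
  rw [iteratedDeriv_Torth_eq,
    iterate_derivative_eq_zero (lt_of_le_of_lt (natDegree_T_le k) hk)]
  simp

end PolyBounds

section Analytic

private lemma key_step {α : ℝ} (hα : 1 < α) {x : ℝ} (hx : 1 ≤ x) :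
    (x+1) ^ (-α) ≤ (α - 1)⁻¹ * (x ^ (1-α) - (x+1) ^ (1-α)) := by
  have hx0 : (0:ℝ) < x := lt_of_lt_of_le one_pos hx
  have h0 : (0:ℝ) < α - 1 := by linarith
  have hlt : x < x + 1 := lt_add_one x
  obtain ⟨c, hc, hceq⟩ := exists_hasDerivAt_eq_slope (fun y => y ^ (1-α))
    (fun y => (1-α) * y ^ ((1-α)-1)) hlt
    (by
      intro y hy
      have hy0 : y ≠ 0 := by
        have := hy.1
        intro h; rw [h] at this; linarith
      exact (Real.continuousAt_rpow_const y (1-α) (Or.inl hy0)).continuousWithinAt)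
    (by
      intro y hy
      have hy0 : y ≠ 0 := by
        have := hy.1
        intro h; rw [h] at this; linarith
      exact Real.hasDerivAt_rpow_const (Or.inl hy0))
  have hc0 : 0 < c := lt_trans hx0 hc.1
  rw [show x + 1 - x = 1 by ring, div_one] at hceq
  have hexp : (1-α) - 1 = -α := by ring
  rw [hexp] at hceq
  have hmono : (x+1) ^ (-α) ≤ c ^ (-α) :=
    Real.rpow_le_rpow_of_nonpos hc0 (le_of_lt hc.2) (by linarith)
  have hdiff : x ^ (1-α) - (x+1) ^ (1-α) = (α - 1) * c ^ (-α) := by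
    have := hceq
    nlinarith [this]
  rw [hdiff]
  rw [show (α - 1)⁻¹ * ((α - 1) * c ^ (-α)) = c ^ (-α) by
    field_simp]
  exact hmono

private lemma rpow_tail_bound {α : ℝ} (hα : 1 < α) {N : ℕ} (hN : 1 ≤ N) :
    ∑' m : ℕ, (((m + (N+1) : ℕ)) : ℝ) ^ (-α) ≤ (α - 1)⁻¹ * (N:ℝ) ^ (1-α) := by
  have h0 : (0:ℝ) < α - 1 := by linarith
  refine Real.tsum_le_of_sum_range_le (fun n => Real.rpow_nonneg (Nat.cast_nonneg _) _) ?_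
  intro n
  set g : ℕ → ℝ := fun i => ((i:ℝ) + N) ^ (1-α) with hg
  have hstep : ∀ i : ℕ, (((i + (N+1) : ℕ)) : ℝ) ^ (-α) ≤ (α-1)⁻¹ * (g i - g (i+1)) := by
    intro i
    have hx : (1:ℝ) ≤ (i:ℝ) + N := by
      have : (1:ℝ) ≤ (N:ℝ) := by exact_mod_cast hN
      linarith [Nat.cast_nonneg (α := ℝ) i]
    have h := key_step hα hx
    have e1 : (((i + (N+1) : ℕ)) : ℝ) = ((i:ℝ) + N) + 1 := by push_cast; ring
    have e2 : g (i+1) = (((i:ℝ) + N) + 1) ^ (1-α) := by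
      simp only [hg]; push_cast; ring_nf
    rw [e1, e2]
    simpa [hg] using h
  calc ∑ i ∈ Finset.range n, (((i + (N+1) : ℕ)) : ℝ) ^ (-α)
      ≤ ∑ i ∈ Finset.range n, (α-1)⁻¹ * (g i - g (i+1)) :=
        Finset.sum_le_sum (fun i _ => hstep i)
    _ = (α-1)⁻¹ * (g 0 - g n) := by
        rw [← Finset.mul_sum, Finset.sum_range_sub' g n]
    _ ≤ (α-1)⁻¹ * g 0 := by
        have : 0 ≤ g n := Real.rpow_nonneg (by linarith [Nat.cast_nonneg (α := ℝ) n, Nat.cast_nonneg (α := ℝ) N]) _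
        have h1 : (0:ℝ) ≤ (α-1)⁻¹ := by positivity
        nlinarith
    _ = (α-1)⁻¹ * (N:ℝ) ^ (1-α) := by simp [hg]

private lemma summable_max_rpow {γ : ℝ} (hγ : γ < -1) :
    Summable (fun k : ℕ => (max 1 (k:ℝ)) ^ γ) := by
  rw [← summable_nat_add_iff 1]
  have h := Real.summable_nat_rpow.mpr hγ
  have h1 := (summable_nat_add_iff (f := fun n : ℕ => (n:ℝ) ^ γ) 1).mpr h
  refine h1.congr ?_
  intro n
  have : max 1 ((n+1 : ℕ):ℝ) = ((n+1 : ℕ):ℝ) := by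
    rw [max_eq_right]
    exact_mod_cast Nat.one_le_iff_ne_zero.mpr (Nat.succ_ne_zero n)
  rw [this]

end Analytic

section KeyTail
set_option maxHeartbeats 1000000 in

private lemma key_tail (r : ℕ) (s μ : ℝ) (hs : 1 ≤ s)
    (hμ : 2*(r:ℝ) - 1/s + 1 < μ) :
    ∃ c0 > 0, ∀ b : ℕ → ℝ, (∀ k, 0 ≤ b k) → Summable (fun k => b k ^ s) →
      Summable (fun k : ℕ => (max 1 (k:ℝ)) ^ (2*(r:ℝ) - μ) * b k) ∧
      ∀ N : ℕ, 1 ≤ N →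
        (∑' m : ℕ, (max 1 (((m + (N+1) : ℕ)):ℝ)) ^ (2*(r:ℝ)-μ) * b (m + (N+1)))
          ≤ c0 * (∑' k, b k ^ s) ^ (1/s) * (N:ℝ) ^ (-μ + 2*(r:ℝ) - 1/s + 1) := by
  have hs0 : (0:ℝ) < s := lt_of_lt_of_le one_pos hs
  have hβ0 : 2*(r:ℝ) - μ < 0 := by
    have h1s : 1/s ≤ 1 := by
      rw [div_le_one hs0]; exact hs
    linarith
  rcases eq_or_lt_of_le hs with h1 | h1
  · -- s = 1
    subst h1
    refine ⟨1, one_pos, ?_⟩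
    intro b hb0 hbs
    have hb : Summable b := hbs.congr (fun k => Real.rpow_one (b k))
    have hW1 : ∀ k : ℕ, (max 1 (k:ℝ)) ^ (2*(r:ℝ) - μ) ≤ 1 := fun k =>
      Real.rpow_le_one_of_one_le_of_nonpos (le_max_left 1 _) (le_of_lt hβ0)
    have hWb : Summable (fun k : ℕ => (max 1 (k:ℝ)) ^ (2*(r:ℝ) - μ) * b k) := by
      refine Summable.of_nonneg_of_le
        (fun k => mul_nonneg (Real.rpow_nonneg (by positivity) _) (hb0 k))
        (fun k => mul_le_of_le_one_left (hb0 k) (hW1 k)) hb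
    refine ⟨hWb, ?_⟩
    intro N hN
    have hN0 : (0:ℝ) < N := by exact_mod_cast hN
    have hterm : ∀ m : ℕ,
        (max 1 (((m + (N+1) : ℕ)):ℝ)) ^ (2*(r:ℝ)-μ) * b (m + (N+1))
          ≤ (N:ℝ) ^ (2*(r:ℝ)-μ) * b (m + (N+1)) := by
      intro m
      have hx1 : (1:ℝ) ≤ ((m + (N+1) : ℕ):ℝ) := by
        exact_mod_cast Nat.one_le_iff_ne_zero.mpr (by omega)
      have hmax : max 1 (((m + (N+1) : ℕ)):ℝ) = ((m + (N+1) : ℕ):ℝ) := max_eq_right hx1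
      rw [hmax]
      refine mul_le_mul_of_nonneg_right ?_ (hb0 _)
      refine Real.rpow_le_rpow_of_nonpos hN0 ?_ (le_of_lt hβ0)
      exact_mod_cast Nat.le_add_left N ((m) + 1) |>.trans (by omega)
    have hsum1 : Summable (fun m : ℕ =>
        (max 1 (((m + (N+1) : ℕ)):ℝ)) ^ (2*(r:ℝ)-μ) * b (m + (N+1))) :=
      (summable_nat_add_iff (N+1)).mpr hWb
    have hsum2 : Summable (fun m : ℕ => (N:ℝ) ^ (2*(r:ℝ)-μ) * b (m + (N+1))) :=
      ((summable_nat_add_iff (N+1)).mpr hb).mul_left _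
    calc (∑' m : ℕ, (max 1 (((m + (N+1) : ℕ)):ℝ)) ^ (2*(r:ℝ)-μ) * b (m + (N+1)))
        ≤ ∑' m : ℕ, (N:ℝ) ^ (2*(r:ℝ)-μ) * b (m + (N+1)) :=
          Summable.tsum_le_tsum hterm hsum1 hsum2
      _ = (N:ℝ) ^ (2*(r:ℝ)-μ) * ∑' m : ℕ, b (m + (N+1)) := tsum_mul_left
      _ ≤ (N:ℝ) ^ (2*(r:ℝ)-μ) * ∑' k : ℕ, b k := by
          refine mul_le_mul_of_nonneg_left ?_ (Real.rpow_nonneg (le_of_lt hN0) _)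
          exact Summable.tsum_le_tsum_of_inj (fun m => m + (N+1))
            (add_left_injective (N+1)) (fun c _ => hb0 c) (fun m => le_refl _)
            ((summable_nat_add_iff (N+1)).mpr hb) hb
      _ = 1 * (∑' k, b k ^ (1:ℝ)) ^ (1/(1:ℝ)) * (N:ℝ) ^ (-μ + 2*(r:ℝ) - 1/1 + 1) := by
          rw [show (∑' k, b k ^ (1:ℝ)) = ∑' k, b k from tsum_congr (fun k => Real.rpow_one _),
            show (-μ + 2*(r:ℝ) - 1/1 + 1) = 2*(r:ℝ) - μ by ring]
          rw [show (1/(1:ℝ)) = 1 by norm_num, Real.rpow_one]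
          ring
  · -- 1 < s
    set q : ℝ := s / (s - 1) with hqdef
    have hpq : s.HolderConjugate q := (Real.holderConjugate_iff_eq_conjExponent h1).mpr rfl
    have hqs : q.HolderConjugate s := hpq.symm
    have hq0 : 0 < q := hqs.pos
    have hinv : s⁻¹ + q⁻¹ = 1 := hpq.inv_add_inv_eq_one
    set α : ℝ := (μ - 2*(r:ℝ)) * q with hαdef
    have hμ2 : q⁻¹ < μ - 2*(r:ℝ) := by
      have : q⁻¹ = 1 - s⁻¹ := by linarith
      rw [this, ← one_div]
      linarith
    have hα : 1 < α := by
      have := mul_lt_mul_of_pos_right hμ2 hq0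
      rwa [inv_mul_cancel₀ (ne_of_gt hq0)] at this
    have hα0 : (0:ℝ) < (α - 1)⁻¹ := by
      rw [inv_pos]; linarith
    refine ⟨((α - 1)⁻¹) ^ (1/q), Real.rpow_pos_of_pos hα0 _, ?_⟩
    intro b hb0 hbs
    have hWq : ∀ k : ℕ, ((max 1 (k:ℝ)) ^ (2*(r:ℝ) - μ)) ^ q
        = (max 1 (k:ℝ)) ^ ((2*(r:ℝ) - μ) * q) :=
      fun k => (Real.rpow_mul (by positivity) _ _).symm
    have hexpq : (2*(r:ℝ) - μ) * q = -α := by rw [hαdef]; ring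
    have hWqsum : Summable (fun k : ℕ => ((max 1 (k:ℝ)) ^ (2*(r:ℝ) - μ)) ^ q) := by
      refine (summable_max_rpow (γ := (2*(r:ℝ) - μ) * q) ?_).congr
        (fun k => (hWq k).symm)
      rw [hexpq]; linarith
    have hWnn : ∀ k : ℕ, 0 ≤ (max 1 (k:ℝ)) ^ (2*(r:ℝ) - μ) :=
      fun k => Real.rpow_nonneg (by positivity) _
    have hWbsum : Summable (fun k : ℕ => (max 1 (k:ℝ)) ^ (2*(r:ℝ) - μ) * b k) :=
      summable_mul_of_Lp_Lq_of_nonneg hqs hWnn hb0 hWqsum hbs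
    refine ⟨hWbsum, ?_⟩
    intro N hN
    have hN0 : (0:ℝ) < N := by exact_mod_cast hN
    set F : ℕ → ℝ := fun m => (max 1 (((m + (N+1) : ℕ)):ℝ)) ^ (2*(r:ℝ)-μ) with hF
    set G : ℕ → ℝ := fun m => b (m + (N+1)) with hG
    have hFq : Summable (fun m => F m ^ q) := (summable_nat_add_iff (N+1)).mpr hWqsum
    have hGs : Summable (fun m => G m ^ s) := (summable_nat_add_iff (N+1)).mpr hbs
    have happ := (Real.summable_and_inner_le_Lp_mul_Lq_tsum_of_nonneg hqs
      (fun m => hWnn _) (fun m => hb0 _) hFq hGs).2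
    have hFq_eval : ∀ m : ℕ, F m ^ q = (((m + (N+1) : ℕ)):ℝ) ^ (-α) := by
      intro m
      have hx1 : (1:ℝ) ≤ ((m + (N+1) : ℕ):ℝ) := by
        exact_mod_cast Nat.one_le_iff_ne_zero.mpr (by omega)
      rw [hF]
      simp only
      rw [hWq, hexpq, max_eq_right hx1]
    have bound1 : (∑' m, F m ^ q) ≤ (α - 1)⁻¹ * (N:ℝ) ^ (1-α) := by
      rw [tsum_congr hFq_eval]
      exact rpow_tail_bound hα hN
    have hexp : (1-α) * (1/q) = -μ + 2*(r:ℝ) - 1/s + 1 := by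
      have hqq : q * q⁻¹ = 1 := mul_inv_cancel₀ (ne_of_gt hq0)
      have hq' : q⁻¹ = 1 - s⁻¹ := by linarith
      calc (1-α) * (1/q) = q⁻¹ - (μ - 2*(r:ℝ)) * (q * q⁻¹) := by
            rw [one_div, hαdef]; ring
        _ = q⁻¹ - (μ - 2*(r:ℝ)) := by rw [hqq]; ring
        _ = -μ + 2*(r:ℝ) - 1/s + 1 := by rw [hq', one_div]; ring
    have bound1' : (∑' m, F m ^ q) ^ (1/q)
        ≤ ((α - 1)⁻¹) ^ (1/q) * (N:ℝ) ^ (-μ + 2*(r:ℝ) - 1/s + 1) := by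
      calc (∑' m, F m ^ q) ^ (1/q) ≤ ((α - 1)⁻¹ * (N:ℝ) ^ (1-α)) ^ (1/q) :=
            Real.rpow_le_rpow (tsum_nonneg (fun m => Real.rpow_nonneg (hWnn _) q)) bound1
              (by positivity)
        _ = ((α - 1)⁻¹) ^ (1/q) * ((N:ℝ) ^ (1-α)) ^ (1/q) :=
            Real.mul_rpow (le_of_lt hα0) (Real.rpow_nonneg (le_of_lt hN0) _)
        _ = ((α - 1)⁻¹) ^ (1/q) * (N:ℝ) ^ ((1-α) * (1/q)) := by
            rw [← Real.rpow_mul (le_of_lt hN0)]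
        _ = ((α - 1)⁻¹) ^ (1/q) * (N:ℝ) ^ (-μ + 2*(r:ℝ) - 1/s + 1) := by rw [hexp]
    have bound2 : (∑' m, G m ^ s) ^ (1/s) ≤ (∑' k, b k ^ s) ^ (1/s) := by
      refine Real.rpow_le_rpow (tsum_nonneg (fun m => Real.rpow_nonneg (hb0 _) s)) ?_
        (by positivity)
      exact Summable.tsum_le_tsum_of_inj (fun m => m + (N+1))
        (add_left_injective (N+1)) (fun c _ => Real.rpow_nonneg (hb0 c) s)
        (fun m => le_refl _) hGs hbs
    calc (∑' m : ℕ, (max 1 (((m + (N+1) : ℕ)):ℝ)) ^ (2*(r:ℝ)-μ) * b (m + (N+1)))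
        = ∑' m, F m * G m := rfl
      _ ≤ (∑' m, F m ^ q) ^ (1/q) * (∑' m, G m ^ s) ^ (1/s) := happ
      _ ≤ (((α - 1)⁻¹) ^ (1/q) * (N:ℝ) ^ (-μ + 2*(r:ℝ) - 1/s + 1))
            * (∑' k, b k ^ s) ^ (1/s) := by
          refine mul_le_mul bound1' bound2
            (Real.rpow_nonneg (tsum_nonneg (fun m => Real.rpow_nonneg (hb0 _) s)) _)
            (by positivity)
      _ = ((α - 1)⁻¹) ^ (1/q) * (∑' k, b k ^ s) ^ (1/s)
            * (N:ℝ) ^ (-μ + 2*(r:ℝ) - 1/s + 1) := by ring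

end KeyTail

set_option maxHeartbeats 1000000 in
/-- Lemma 1: C-norm bound for the truncation error of the Chebyshev derivative series. -/
theorem stmt5 (r : ℕ) (s μ : ℝ) (hr : 1 ≤ r) (hs : 1 ≤ s)
    (hμ : 2*(r:ℝ) - 1/s + 1 < μ) :
    ∃ c > 0, ∀ f : ℝ → ℝ,
      Summable (fun k : ℕ => (max 1 (k:ℝ)) ^ (s*μ) * |chebCoeff f k| ^ s) →
      ∀ N : ℕ, r ≤ N →
        normC (fun t => chebDeriv r f t -
            ∑ k ∈ Finset.Icc r N, chebCoeff f k * iteratedDeriv r (Torth k) t)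
          ≤ c * normW s μ f * (N:ℝ) ^ (-μ + 2*(r:ℝ) - 1/s + 1) := by
  obtain ⟨c0, hc0, HB⟩ := key_tail r s μ hs hμ
  refine ⟨2^r * c0, by positivity, ?_⟩
  intro f hsum N hN
  have hs0 : (0:ℝ) < s := lt_of_lt_of_le one_pos hs
  set b : ℕ → ℝ := fun k => (max 1 (k:ℝ)) ^ μ * |chebCoeff f k| with hbdef
  have hb0 : ∀ k, 0 ≤ b k := fun k =>
    mul_nonneg (Real.rpow_nonneg (by positivity) _) (abs_nonneg _)
  have hterm_eq : ∀ k : ℕ, (max 1 (k:ℝ)) ^ (s*μ) * |chebCoeff f k| ^ s = b k ^ s := by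
    intro k
    rw [hbdef]
    simp only
    rw [Real.mul_rpow (Real.rpow_nonneg (by positivity) _) (abs_nonneg _),
      ← Real.rpow_mul (by positivity : (0:ℝ) ≤ max 1 (k:ℝ)), mul_comm μ s]
  have hbs : Summable (fun k => b k ^ s) := hsum.congr hterm_eq
  obtain ⟨hWb, hTail⟩ := HB b hb0 hbs
  have hN1 : 1 ≤ N := le_trans hr hN
  have hNW : normW s μ f = (∑' k, b k ^ s) ^ (1/s) := by
    rw [normW]
    congr 1
    exact tsum_congr hterm_eq
  have hmaxpos : ∀ k : ℕ, (0:ℝ) < max 1 (k:ℝ) :=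
    fun k => lt_of_lt_of_le one_pos (le_max_left 1 (k:ℝ))
  have hcomb : ∀ k : ℕ, (max 1 (k:ℝ)) ^ (2*(r:ℝ) - μ) * b k
      = (max 1 (k:ℝ))^(2*r : ℕ) * |chebCoeff f k| := by
    intro k
    rw [hbdef]
    simp only
    rw [← mul_assoc, ← Real.rpow_add (hmaxpos k),
      show 2*(r:ℝ) - μ + μ = ((2*r : ℕ):ℝ) by push_cast; ring, Real.rpow_natCast]
  unfold normC
  haveI : Nonempty (Set.Icc (-1:ℝ) 1) := ⟨⟨0, by norm_num⟩⟩
  refine ciSup_le ?_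
  rintro ⟨t, ht⟩
  simp only
  obtain ⟨ht1, ht2⟩ := Set.mem_Icc.mp ht
  have htabs : |t| ≤ 1 := abs_le.mpr ⟨ht1, ht2⟩
  set g : ℕ → ℝ := fun k => chebCoeff f k * iteratedDeriv r (Torth k) t with hgdef
  have hgle : ∀ k, |g k| ≤ 2^r * ((max 1 (k:ℝ)) ^ (2*(r:ℝ) - μ) * b k) := by
    intro k
    rw [hgdef]
    simp only [abs_mul]
    calc |chebCoeff f k| * |iteratedDeriv r (Torth k) t|
        ≤ |chebCoeff f k| * (2^r * (max 1 (k:ℝ))^(2*r)) :=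
          mul_le_mul_of_nonneg_left (Torth_deriv_bound r k htabs) (abs_nonneg _)
      _ = 2^r * ((max 1 (k:ℝ))^(2*r : ℕ) * |chebCoeff f k|) := by ring
      _ = 2^r * ((max 1 (k:ℝ)) ^ (2*(r:ℝ) - μ) * b k) := by rw [hcomb]
  have habs_sum : Summable (fun k => |g k|) :=
    Summable.of_nonneg_of_le (fun k => abs_nonneg _) hgle (hWb.mul_left (2^r))
  have hg_sum : Summable g :=
    Summable.of_norm (habs_sum.congr (fun k => (Real.norm_eq_abs (g k)).symm))
  have hfin : ∑ k ∈ Finset.Icc r N, g k = ∑ k ∈ Finset.range (N+1), g k := by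
    refine Finset.sum_subset ?_ ?_
    · intro x hx
      rw [Finset.mem_Icc] at hx
      rw [Finset.mem_range]
      omega
    · intro x hx1 hx2
      rw [Finset.mem_range] at hx1
      rw [Finset.mem_Icc] at hx2
      have hxr : x < r := by omega
      rw [hgdef]
      simp only
      rw [Torth_deriv_zero hxr t, mul_zero]
  have hsplit := Summable.sum_add_tsum_nat_add (f := g) (N+1) hg_sum
  have hcd : chebDeriv r f t = ∑' k, g k := rfl
  have hdiff : chebDeriv r f t - ∑ k ∈ Finset.Icc r N, g k = ∑' i, g (i + (N+1)) := by
    rw [hcd, hfin]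
    linarith [hsplit]
  rw [hdiff]
  have habs_shift : Summable (fun i => ‖g (i + (N+1))‖) := by
    refine ((summable_nat_add_iff (N+1)).mpr habs_sum).congr ?_
    intro i
    exact (Real.norm_eq_abs _).symm
  have hbd_shift : Summable (fun i : ℕ =>
      2^r * ((max 1 (((i + (N+1) : ℕ)):ℝ)) ^ (2*(r:ℝ) - μ) * b (i + (N+1)))) :=
    ((summable_nat_add_iff (N+1)).mpr hWb).mul_left _
  calc |∑' i, g (i + (N+1))|
      ≤ ∑' i, |g (i + (N+1))| := by
        have h := norm_tsum_le_tsum_norm habs_shift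
        rw [Real.norm_eq_abs] at h
        refine le_trans h (le_of_eq (tsum_congr (fun i => Real.norm_eq_abs _)))
    _ ≤ ∑' i, 2^r * ((max 1 (((i + (N+1) : ℕ)):ℝ)) ^ (2*(r:ℝ) - μ) * b (i + (N+1))) := by
        refine Summable.tsum_le_tsum (fun i => hgle (i + (N+1)))
          ((summable_nat_add_iff (N+1)).mpr habs_sum) hbd_shift
    _ = 2^r * ∑' i, (max 1 (((i + (N+1) : ℕ)):ℝ)) ^ (2*(r:ℝ) - μ) * b (i + (N+1)) :=
        tsum_mul_left
    _ ≤ 2^r * (c0 * (∑' k, b k ^ s) ^ (1/s) * (N:ℝ) ^ (-μ + 2*(r:ℝ) - 1/s + 1)) := by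
        refine mul_le_mul_of_nonneg_left (hTail N hN1) (by positivity)
    _ = 2^r * c0 * normW s μ f * (N:ℝ) ^ (-μ + 2*(r:ℝ) - 1/s + 1) := by
        rw [hNW]; ring
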